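/- Let Y = [0,1]×[0,1] and define g: Y → Y by: g(x,1) = (1/2, 1) for all x; and for 0 ≤ p < 1, g(x,p) = (2x/(1-p), p/(1+p)) if x < (1-p)/2, g(x,p) = (1/2, 1) if (1-p)/2 ≤ x ≤ (1+p)/2, and g(x,p) = (2(x-(1+p)/2)/(1-p), p/(1+p)) if x > (1+p)/2. Then for Lebesgue-a.e. (x,p) ∈ Y there exists n with g^n(x,p) = (1/2, 1); i.e., the set K₂ = {(x,p) : ∀n, g^n(x,p) ≠ (1/2,1)} has Lebesgue measure zero. -/

import Mathlib

open Filter MeasureTheory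

/-- The sieving map `g` on the unit square `Y = [0,1] × [0,1]`. -/
noncomputable def g : ℝ × ℝ → ℝ × ℝ := fun z =>
  let x := z.1
  let p := z.2
  if p = 1 then (1 / 2, 1)
  else if x < (1 - p) / 2 then (2 * x / (1 - p), p / (1 + p))
  else if x ≤ (1 + p) / 2 then (1 / 2, 1)
  else (2 * (x - (1 + p) / 2) / (1 - p), p / (1 + p))

lemma g_one (x : ℝ) : g (x, 1) = (1/2, 1) := by simp [g]

lemma g_left {x p : ℝ} (hp : p ≠ 1) (hx : x < (1-p)/2) :
    g (x, p) = (2 * x / (1 - p), p / (1 + p)) := by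
  simp [g, hp, hx]

lemma g_mid {x p : ℝ} (hp : p ≠ 1) (h1 : ¬ x < (1-p)/2) (h2 : x ≤ (1+p)/2) :
    g (x, p) = (1/2, 1) := by
  simp [g, hp, h1, h2]

lemma g_right {x p : ℝ} (hp : p ≠ 1) (h1 : ¬ x < (1-p)/2) (h2 : ¬ x ≤ (1+p)/2) :
    g (x, p) = (2 * (x - (1+p)/2) / (1 - p), p / (1 + p)) := by
  simp [g, hp, h1, h2]

lemma g_measurable : Measurable g := by
  unfold g
  refine Measurable.ite (measurable_snd (measurableSet_singleton 1)) measurable_const ?_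
  refine Measurable.ite (measurableSet_lt measurable_fst (by fun_prop)) (by fun_prop) ?_
  exact Measurable.ite (measurableSet_le measurable_fst (by fun_prop)) measurable_const (by fun_prop)

/-- Fiber survival set. -/
def Asurv (p : ℝ) : Set ℝ :=
  {x | x ∈ Set.Icc (0:ℝ) 1 ∧ ∀ n : ℕ, g^[n] (x, p) ≠ (1/2, 1)}

lemma Asurv_measurable (p : ℝ) : MeasurableSet (Asurv p) := by
  have h1 : MeasurableSet {x : ℝ | x ∈ Set.Icc (0:ℝ) 1} := measurableSet_Icc
  have h2 : ∀ n : ℕ, MeasurableSet {x : ℝ | g^[n] (x, p) ≠ (1/2, 1)} := by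
    intro n
    have : Measurable fun x : ℝ => g^[n] (x, p) :=
      (g_measurable.iterate n).comp (measurable_id.prodMk measurable_const)
    exact (this (measurableSet_singleton ((1:ℝ)/2, (1:ℝ)))).compl
  have : Asurv p = {x : ℝ | x ∈ Set.Icc (0:ℝ) 1} ∩ ⋂ n, {x : ℝ | g^[n] (x, p) ≠ (1/2, 1)} := by
    ext x; simp [Asurv]
  rw [this]
  exact h1.inter (MeasurableSet.iInter h2)

lemma Asurv_one : Asurv 1 = ∅ := by
  ext x
  simp only [Asurv, Set.mem_setOf_eq, Set.mem_empty_iff_false, iff_false, not_and, not_forall]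
  intro _
  exact ⟨1, by simp [g_one]⟩

lemma Asurv_subset (p : ℝ) (hp0 : 0 < p) (hp1 : p < 1) :
    Asurv p ⊆ ((2/(1-p)) * ·) ⁻¹' Asurv (p/(1+p)) ∪
      (fun x => (2/(1-p)) * (x + -((1+p)/2))) ⁻¹' Asurv (p/(1+p)) := by
  rintro x ⟨⟨hx0, hx1⟩, h⟩
  have hp : p ≠ 1 := hp1.ne
  have h1p : (0:ℝ) < 1 - p := by linarith
  have hiter : ∀ n : ℕ, g^[n] (g (x, p)) ≠ (1/2, 1) := by
    intro n
    have := h (n + 1)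
    rwa [Function.iterate_succ_apply] at this
  rcases lt_or_ge x ((1-p)/2) with hl | hge
  · left
    have hg : g (x, p) = (2 * x / (1 - p), p / (1 + p)) := g_left hp hl
    refine ⟨⟨?_, ?_⟩, ?_⟩
    · positivity
    · show 2/(1-p) * x ≤ 1
      rw [div_mul_eq_mul_div, div_le_one h1p]; linarith
    · intro n
      have := hiter n
      rw [hg] at this
      show g^[n] (2/(1-p) * x, p/(1+p)) ≠ (1/2, 1)
      have hxeq : 2/(1-p) * x = 2 * x / (1-p) := by ring
      rw [hxeq]; exact this
  · rcases le_or_gt x ((1+p)/2) with hm | hr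
    · exact absurd (by rw [Function.iterate_one]; exact g_mid hp (not_lt.2 hge) hm) (h 1)
    · right
      have hg : g (x, p) = (2 * (x - (1+p)/2) / (1 - p), p / (1 + p)) :=
        g_right hp (not_lt.2 hge) (not_le.2 hr)
      refine ⟨⟨?_, ?_⟩, ?_⟩
      · show 0 ≤ 2/(1-p) * (x + -((1+p)/2))
        have : (0:ℝ) ≤ x + -((1+p)/2) := by linarith
        positivity
      · show 2/(1-p) * (x + -((1+p)/2)) ≤ 1
        rw [div_mul_eq_mul_div, div_le_one h1p]; linarith
      · intro n
        have := hiter n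
        rw [hg] at this
        show g^[n] (2/(1-p) * (x + -((1+p)/2)), p/(1+p)) ≠ (1/2, 1)
        have hxeq : 2/(1-p) * (x + -((1+p)/2)) = 2 * (x - (1+p)/2) / (1-p) := by ring
        rw [hxeq]; exact this

lemma Asurv_vol_step (p : ℝ) (hp0 : 0 < p) (hp1 : p < 1) :
    volume (Asurv p) ≤ ENNReal.ofReal (1 - p) * volume (Asurv (p/(1+p))) := by
  have h1p : (0:ℝ) < 1 - p := by linarith
  have hc : (2:ℝ)/(1-p) ≠ 0 := by positivity
  have hinv : ((2:ℝ)/(1-p))⁻¹ = (1-p)/2 := by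
    rw [inv_div]
  calc volume (Asurv p)
      ≤ volume (((2/(1-p)) * ·) ⁻¹' Asurv (p/(1+p)) ∪
          (fun x => (2/(1-p)) * (x + -((1+p)/2))) ⁻¹' Asurv (p/(1+p))) :=
        measure_mono (Asurv_subset p hp0 hp1)
    _ ≤ volume (((2/(1-p)) * ·) ⁻¹' Asurv (p/(1+p))) +
          volume ((fun x => (2/(1-p)) * (x + -((1+p)/2))) ⁻¹' Asurv (p/(1+p))) :=
        measure_union_le _ _
    _ = ENNReal.ofReal ((1-p)/2) * volume (Asurv (p/(1+p))) +
          ENNReal.ofReal ((1-p)/2) * volume (Asurv (p/(1+p))) := by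
        rw [Real.volume_preimage_mul_left hc, hinv, abs_of_pos (by positivity)]
        congr 1
        have : (fun x : ℝ => (2/(1-p)) * (x + -((1+p)/2))) =
            ((2/(1-p)) * ·) ∘ (fun x : ℝ => x + -((1+p)/2)) := rfl
        rw [this, Set.preimage_comp, measure_preimage_add_right,
          Real.volume_preimage_mul_left hc, hinv, abs_of_pos (by positivity)]
    _ = ENNReal.ofReal (1 - p) * volume (Asurv (p/(1+p))) := by
        rw [← add_mul, ← ENNReal.ofReal_add (by positivity) (by positivity)]
        norm_num

lemma Asurv_vol_bound : ∀ n : ℕ, ∀ p : ℝ, 0 < p → p ≤ 1 →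
    volume (Asurv p) ≤ ENNReal.ofReal (1 / (1 + n * p)) := by
  intro n
  induction n with
  | zero =>
    intro p hp0 _
    calc volume (Asurv p) ≤ volume (Set.Icc (0:ℝ) 1) :=
          measure_mono fun x hx => hx.1
      _ = ENNReal.ofReal (1 / (1 + (0:ℕ) * p)) := by simp [Real.volume_Icc]
  | succ n ih =>
    intro p hp0 hp1
    rcases eq_or_lt_of_le hp1 with rfl | hp1
    · simp [Asurv_one]
    · have h1p : (0:ℝ) < 1 - p := by linarith
      have hp' : 0 < p / (1 + p) := by positivity
      have hp'1 : p / (1 + p) ≤ 1 := by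
        rw [div_le_one (by linarith)]; linarith
      calc volume (Asurv p)
          ≤ ENNReal.ofReal (1 - p) * volume (Asurv (p/(1+p))) :=
            Asurv_vol_step p hp0 hp1
        _ ≤ ENNReal.ofReal (1 - p) * ENNReal.ofReal (1 / (1 + n * (p/(1+p)))) :=
            mul_le_mul_right (ih _ hp' hp'1) _
        _ = ENNReal.ofReal ((1 - p) * (1 / (1 + n * (p/(1+p))))) :=
            (ENNReal.ofReal_mul (by linarith)).symm
        _ ≤ ENNReal.ofReal (1 / (1 + (n+1 : ℕ) * p)) := by
            apply ENNReal.ofReal_le_ofReal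
            have hden : (0:ℝ) < 1 + n * (p/(1+p)) := by positivity
            have hden2 : (0:ℝ) < 1 + ((n:ℝ)+1) * p := by positivity
            push_cast
            rw [mul_one_div, div_le_div_iff₀ hden hden2]
            have h1 : (0:ℝ) < 1 + p := by linarith
            have hexp : 1 + (n:ℝ) * (p/(1+p)) = (1 + p + n*p) / (1+p) := by
              field_simp
            rw [hexp, one_mul, le_div_iff₀ h1]
            nlinarith [sq_nonneg p, Nat.cast_nonneg (α := ℝ) n, mul_nonneg (Nat.cast_nonneg (α := ℝ) n) hp0.le]

lemma Asurv_vol_zero (p : ℝ) (hp0 : 0 < p) (hp1 : p ≤ 1) : volume (Asurv p) = 0 := by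
  have htend : Tendsto (fun n : ℕ => ENNReal.ofReal (1 / (1 + n * p))) atTop (nhds 0) := by
    have h1 : Tendsto (fun n : ℕ => 1 + (n:ℝ) * p) atTop atTop := by
      apply tendsto_atTop_add_const_left
      exact Tendsto.atTop_mul_const hp0 tendsto_natCast_atTop_atTop
    have h2 : Tendsto (fun n : ℕ => 1 / (1 + (n:ℝ) * p)) atTop (nhds 0) := by
      simpa [one_div, Pi.inv_def] using h1.inv_tendsto_atTop
    simpa using (ENNReal.tendsto_ofReal h2)
  have := ge_of_tendsto' htend (fun n => Asurv_vol_bound n p hp0 hp1)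
  exact le_antisymm this zero_le

/-- The set `K₂` of points of the unit square never mapped to `s₂ = (1/2, 1)` by the
iterates of the sieving map `g` has Lebesgue measure zero. -/
theorem sieving_nontypical_measure_zero :
    volume {z : ℝ × ℝ | z ∈ Set.Icc (0 : ℝ) 1 ×ˢ Set.Icc (0 : ℝ) 1 ∧
      ∀ n : ℕ, g^[n] z ≠ (1 / 2, 1)} = 0 := by
  set S : Set (ℝ × ℝ) := {z : ℝ × ℝ | z ∈ Set.Icc (0 : ℝ) 1 ×ˢ Set.Icc (0 : ℝ) 1 ∧
      ∀ n : ℕ, g^[n] z ≠ (1 / 2, 1)} with hS_def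
  have hS : MeasurableSet S := by
    have h1 : MeasurableSet (Set.Icc (0:ℝ) 1 ×ˢ Set.Icc (0:ℝ) 1) :=
      measurableSet_Icc.prod measurableSet_Icc
    have h2 : ∀ n : ℕ, MeasurableSet {z : ℝ × ℝ | g^[n] z ≠ (1/2, 1)} := fun n =>
      ((g_measurable.iterate n) (measurableSet_singleton ((1:ℝ)/2, (1:ℝ)))).compl
    have : S = (Set.Icc (0:ℝ) 1 ×ˢ Set.Icc (0:ℝ) 1) ∩ ⋂ n, {z : ℝ × ℝ | g^[n] z ≠ (1/2, 1)} := by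
      ext z; simp [hS_def]
    rw [this]
    exact h1.inter (MeasurableSet.iInter h2)
  have hswap : MeasurableSet (Prod.swap ⁻¹' S : Set (ℝ × ℝ)) := hS.preimage measurable_swap
  have hkey : (volume : Measure (ℝ × ℝ)) (Prod.swap ⁻¹' S) = volume S := by
    rw [Measure.volume_eq_prod]
    exact Measure.measurePreserving_swap.measure_preimage hS.nullMeasurableSet
  rw [← hkey, Measure.volume_eq_prod]
  rw [Measure.measure_prod_null hswap]
  have h0 : ∀ᵐ p : ℝ, p ≠ 0 := by
    rw [ae_iff]
    simp only [not_not, Set.setOf_eq_eq_singleton]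
    exact measure_singleton 0
  filter_upwards [h0] with p hp
  simp only [Pi.zero_apply]
  rcases le_or_gt p 0 with hple | hpgt
  · have : (Prod.mk p ⁻¹' (Prod.swap ⁻¹' S)) = ∅ := by
      ext x
      simp only [Set.mem_preimage, Prod.swap_prod_mk, Set.mem_empty_iff_false, iff_false]
      rintro ⟨⟨_, hpmem⟩, _⟩
      exact hp (le_antisymm hple hpmem.1)
    simp [this]
  · rcases le_or_gt p 1 with hp1 | hp1'
    · refine measure_mono_null ?_ (Asurv_vol_zero p hpgt hp1)
      intro x hx
      obtain ⟨⟨hxmem, _⟩, hiter⟩ := hx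
      exact ⟨hxmem, hiter⟩
    · have : (Prod.mk p ⁻¹' (Prod.swap ⁻¹' S)) = ∅ := by
        ext x
        simp only [Set.mem_preimage, Prod.swap_prod_mk, Set.mem_empty_iff_false, iff_false]
        rintro ⟨⟨_, hpmem⟩, _⟩
        exact absurd hpmem.2 (not_le.2 hp1')
      simp [this]
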